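/- arXiv:1105.0585 — 2 statements merged into one kernel-verified Lean document; each statement's English description precedes it below -/
import Mathlib

section
/- For every real ν > 0 and every real u with 0 < u < 1/(1−q), the first q-Bessel function satisfies ∂^q_u ( u^{ν} J^{(1)}_ν(u|q²) ) = u^{ν} J^{(1)}_{ν−1}(u|q²). -/
set_option maxHeartbeats 1000000


open scoped BigOperators

noncomputable section

/-- The q-number `[u]_q = (q^u - 1)/(q - 1)`. -/
def qNum (q u : ℝ) : ℝ := (q ^ u - 1) / (q - 1)

/-- The q-factorial `[n]_q! = ∏_{i=1}^n [i]_q`. -/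
def qFact (q : ℝ) (n : ℕ) : ℝ := ∏ i ∈ Finset.range n, qNum q ((i : ℝ) + 1)

/-- The q-Gamma function `Γ_q(t) = (1-q)^{1-t} ∏_{k=0}^∞ (1-q^{k+1})/(1-q^{k+t})`. -/
def qGamma (q t : ℝ) : ℝ :=
  (1 - q) ^ (1 - t) * ∏' k : ℕ, (1 - q ^ (k + 1)) / (1 - q ^ ((k : ℝ) + t))

/-- The q-derivative `∂^q_t f(t) = (f(qt) - f(t))/((q-1)t)`.
The `q⁻¹`-derivative is `qDeriv q⁻¹`. -/
def qDeriv (q : ℝ) (f : ℝ → ℝ) (t : ℝ) : ℝ := (f (q * t) - f t) / ((q - 1) * t)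

/-- The q-Pochhammer symbol `(a; q)_k = ∏_{l=0}^{k-1} (1 - a q^l)`. -/
def qPoch (a q : ℝ) (k : ℕ) : ℝ := ∏ l ∈ Finset.range k, (1 - a * q ^ l)

/-- The q-exponential `E_q(t) = ∑_{j=0}^∞ q^{j(j-1)/2} t^j/[j]_q!`. -/
def qExpE (q t : ℝ) : ℝ := ∑' j : ℕ, q ^ (j * (j - 1) / 2) * t ^ j / qFact q j

/-- `e_q(-u) := 1/E_q(u)` (intended for `u ≥ 0`); `qExpe q u` denotes `e_q(-u)`. -/
def qExpe (q u : ℝ) : ℝ := (qExpE q u)⁻¹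

/-- The first q-Bessel function `J^{(1)}_ν(x|q²)`. -/
def qBessel1 (q ν x : ℝ) : ℝ :=
  (x / (1 + q)) ^ ν *
    ∑' i : ℕ, (-1 : ℝ) ^ i / (qFact (q ^ 2) i * qGamma (q ^ 2) ((i : ℝ) + ν + 1)) *
      (x / (1 + q)) ^ (2 * i)

/-- The second q-Bessel function `J^{(2)}_ν(x|q²)`. -/
def qBessel2 (q ν x : ℝ) : ℝ :=
  q ^ (ν ^ 2) * (x / (1 + q)) ^ ν *
    ∑' i : ℕ, q ^ (2 * (i : ℝ) * ((i : ℝ) + ν)) * (-1 : ℝ) ^ i /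
        (qFact (q ^ 2) i * qGamma (q ^ 2) ((i : ℝ) + ν + 1)) *
      (x / (1 + q)) ^ (2 * i)

/-- The q-Laguerre polynomial `𝓛^{(α)}_j(u|q²)`. -/
def qLaguerre (q α : ℝ) (j : ℕ) (u : ℝ) : ℝ :=
  ∑ i ∈ Finset.range (j + 1),
    q ^ ((j - i) * (j - i + 1)) * (-u) ^ i / (qFact (q ^ 2) (j - i) * qFact (q ^ 2) i) *
      (qPoch (q ^ (2 * (i : ℝ) + 2 * α + 2)) (q ^ 2) (j - i) / (1 - q ^ 2) ^ (j - i))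

/-- The q-Laguerre polynomial `𝓛^{(α)}_j(u|q^{-2})`. -/
def qLaguerreInv (q α : ℝ) (j : ℕ) (u : ℝ) : ℝ :=
  q ^ (-(j : ℝ) * ((j : ℝ) + 1 + 2 * α)) *
    ∑ i ∈ Finset.range (j + 1),
      q ^ (2 * (i : ℝ) * ((i : ℝ) + α)) * (-u) ^ i / (qFact (q ^ 2) (j - i) * qFact (q ^ 2) i) *
        (qPoch (q ^ (2 * (i : ℝ) + 2 * α + 2)) (q ^ 2) (j - i) / (1 - q ^ 2) ^ (j - i))

/-- The finite Jackson q-integral `∫_0^a f(t) d_q t = (1-q) a ∑_{k=0}^∞ f(q^k a) q^k`. -/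
def jackson (q a : ℝ) (f : ℝ → ℝ) : ℝ := (1 - q) * a * ∑' k : ℕ, f (q ^ k * a) * q ^ k

/-- The infinite Jackson q-integral `∫_0^{γ·∞} f(t) d_q t = (1-q) γ ∑_{k=-∞}^∞ f(q^k γ) q^k`. -/
def jacksonInf (q γ : ℝ) (f : ℝ → ℝ) : ℝ := (1 - q) * γ * ∑' k : ℤ, f (q ^ k * γ) * q ^ k

/-- The first q-Hankel transform `𝓗̄^{q,β}_ν`. -/
def hankel1 (q μ ν β : ℝ) (f : ℝ → ℝ) (t : ℝ) : ℝ :=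
  (1 + q) / μ * jackson q (Real.sqrt (μ / ((1 - q ^ 2) * β)))
    (fun r => qBessel1 q ν ((1 + q) / μ * (r * t)) / (r * t) ^ ν * r ^ (2 * ν + 1) * f r)

/-- The second q-Hankel transform `𝓗^{q,γ}_ν`. -/
def hankel2 (q μ ν γ : ℝ) (f : ℝ → ℝ) (r : ℝ) : ℝ :=
  (1 + q) / μ * jacksonInf q γ
    (fun t => qBessel2 q ν (q * ((1 + q) / μ) * (r * t)) / (r * t) ^ ν * t ^ (2 * ν + 1) * f t)


noncomputable def LA (p t : ℝ) : ℝ := ∑' k : ℕ, Real.log (1 - p ^ ((k : ℝ) + t))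

lemma g_pos {p : ℝ} (hp0 : 0 < p) (hp1 : p < 1) (t : ℝ) (ht : 0 < t) (k : ℕ) :
    0 < 1 - p ^ ((k : ℝ) + t) := by
  have : p ^ ((k : ℝ) + t) < 1 := Real.rpow_lt_one hp0.le hp1 (by positivity)
  linarith

lemma g_le_one {p : ℝ} (hp0 : 0 < p) (t : ℝ) (k : ℕ) : 1 - p ^ ((k : ℝ) + t) ≤ 1 := by
  have : 0 ≤ p ^ ((k : ℝ) + t) := Real.rpow_nonneg hp0.le _
  linarith

lemma log_g_summable {p : ℝ} (hp0 : 0 < p) (hp1 : p < 1) (t : ℝ) (ht : 0 < t) :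
    Summable fun k : ℕ => Real.log (1 - p ^ ((k : ℝ) + t)) := by
  have hpt1 : p ^ t < 1 := Real.rpow_lt_one hp0.le hp1 ht
  have hpt0 : 0 < p ^ t := Real.rpow_pos_of_pos hp0 t
  rw [← summable_neg_iff]
  have hsum : Summable fun k : ℕ => (p ^ t / (1 - p ^ t)) * p ^ k :=
    (summable_geometric_of_lt_one hp0.le hp1).mul_left _
  refine Summable.of_nonneg_of_le (fun k => ?_) (fun k => ?_) hsum
  · simp only [neg_nonneg]
    exact Real.log_nonpos (g_pos hp0 hp1 t ht k).le (g_le_one hp0 t k)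
  ·
    have hsplit : p ^ ((k : ℝ) + t) = p ^ k * p ^ t := by
      rw [Real.rpow_add hp0, Real.rpow_natCast]
    have hle : p ^ ((k : ℝ) + t) ≤ p ^ t := by
      rw [hsplit]
      nlinarith [pow_le_one₀ hp0.le hp1.le (n := k), hpt0]
    have hg0 := g_pos hp0 hp1 t ht k
    have h1 : -Real.log (1 - p ^ ((k : ℝ) + t)) ≤ (1 - p ^ ((k : ℝ) + t))⁻¹ - 1 := by
      rw [← Real.log_inv]
      exact Real.log_le_sub_one_of_pos (by positivity)
    have h2 : (1 - p ^ ((k : ℝ) + t))⁻¹ - 1 = p ^ ((k : ℝ) + t) / (1 - p ^ ((k : ℝ) + t)) := by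
      field_simp
      ring
    have h3 : p ^ ((k : ℝ) + t) / (1 - p ^ ((k : ℝ) + t)) ≤ p ^ ((k : ℝ) + t) / (1 - p ^ t) :=
      div_le_div_of_nonneg_left (by positivity) (by linarith) (by linarith)
    calc -Real.log (1 - p ^ ((k : ℝ) + t)) ≤ p ^ ((k : ℝ) + t) / (1 - p ^ t) :=
          (h1.trans_eq h2).trans h3
      _ = p ^ t / (1 - p ^ t) * p ^ k := by rw [hsplit]; ring

lemma hasProd_g {p : ℝ} (hp0 : 0 < p) (hp1 : p < 1) (t : ℝ) (ht : 0 < t) :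
    HasProd (fun k : ℕ => 1 - p ^ ((k : ℝ) + t)) (Real.exp (LA p t)) := by
  have h := (log_g_summable hp0 hp1 t ht).hasSum.rexp
  exact h.congr_fun fun k => (Real.exp_log (g_pos hp0 hp1 t ht k)).symm

lemma LA_nonpos {p : ℝ} (hp0 : 0 < p) (hp1 : p < 1) (t : ℝ) (ht : 0 < t) : LA p t ≤ 0 :=
  tsum_nonpos fun k => Real.log_nonpos (g_pos hp0 hp1 t ht k).le (g_le_one hp0 t k)

lemma LA_shift {p : ℝ} (hp0 : 0 < p) (hp1 : p < 1) (t : ℝ) (ht : 0 < t) :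
    LA p t = Real.log (1 - p ^ t) + LA p (t + 1) := by
  unfold LA
  rw [Summable.tsum_eq_zero_add (log_g_summable hp0 hp1 t ht)]
  congr 1
  · norm_num
  · refine tsum_congr fun k => ?_
    congr 2
    push_cast
    ring


lemma npow_eq_rpow {p : ℝ} (hp0 : 0 < p) (k : ℕ) :
    (1 - p ^ (k + 1) : ℝ) = 1 - p ^ ((k : ℝ) + 1) := by
  rw [← Real.rpow_natCast p (k + 1)]
  push_cast
  ring_nf

lemma qGamma_eq {p : ℝ} (hp0 : 0 < p) (hp1 : p < 1) (t : ℝ) (ht : 0 < t) :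
    qGamma p t = (1 - p) ^ (1 - t) * Real.exp (LA p 1 - LA p t) := by
  unfold qGamma
  congr 1
  have hs1 := log_g_summable hp0 hp1 1 one_pos
  have hst := log_g_summable hp0 hp1 t ht
  have hterm : ∀ k : ℕ, (1 - p ^ (k + 1)) / (1 - p ^ ((k : ℝ) + t)) =
      Real.exp (Real.log (1 - p ^ ((k : ℝ) + 1)) - Real.log (1 - p ^ ((k : ℝ) + t))) := by
    intro k
    rw [Real.exp_sub, Real.exp_log (g_pos hp0 hp1 1 one_pos k),
      Real.exp_log (g_pos hp0 hp1 t ht k), npow_eq_rpow hp0 k]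
  have hasprod : HasProd (fun k : ℕ => (1 - p ^ (k + 1)) / (1 - p ^ ((k : ℝ) + t)))
      (Real.exp (∑' k : ℕ,
        (Real.log (1 - p ^ ((k : ℝ) + 1)) - Real.log (1 - p ^ ((k : ℝ) + t))))) := by
    have h := ((hs1.sub hst).hasSum).rexp
    exact h.congr_fun fun k => hterm k
  rw [hasprod.tprod_eq, Summable.tsum_sub hs1 hst]
  rfl

lemma qGamma_pos {p : ℝ} (hp0 : 0 < p) (hp1 : p < 1) (t : ℝ) (ht : 0 < t) :
    0 < qGamma p t := by
  rw [qGamma_eq hp0 hp1 t ht]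
  have h1 : (0 : ℝ) < 1 - p := by linarith
  positivity

lemma qGamma_ge {p : ℝ} (hp0 : 0 < p) (hp1 : p < 1) (t : ℝ) (ht : 0 < t) :
    (1 - p) ^ (1 - t) * Real.exp (LA p 1) ≤ qGamma p t := by
  rw [qGamma_eq hp0 hp1 t ht]
  have h1 : (0 : ℝ) < 1 - p := by linarith
  have h2 : LA p 1 ≤ LA p 1 - LA p t := by linarith [LA_nonpos hp0 hp1 t ht]
  exact mul_le_mul_of_nonneg_left (Real.exp_le_exp.2 h2) (Real.rpow_nonneg h1.le _)

lemma qGamma_add_one {p : ℝ} (hp0 : 0 < p) (hp1 : p < 1) (t : ℝ) (ht : 0 < t) :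
    qGamma p (t + 1) = qNum p t * qGamma p t := by
  have hpt1 : p ^ t < 1 := Real.rpow_lt_one hp0.le hp1 ht
  have hpt0 : 0 < p ^ t := Real.rpow_pos_of_pos hp0 t
  rw [qGamma_eq hp0 hp1 (t + 1) (by linarith), qGamma_eq hp0 hp1 t ht]
  unfold qNum
  rw [LA_shift hp0 hp1 t ht]
  have h1 : (1 - p : ℝ) ^ (1 - (t + 1)) = (1 - p) ^ (1 - t) / (1 - p) := by
    rw [show (1 : ℝ) - (t + 1) = (1 - t) - 1 by ring, Real.rpow_sub (by linarith),
      Real.rpow_one]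
  have h2 : LA p 1 - (Real.log (1 - p ^ t) + LA p (t + 1)) =
      (LA p 1 - LA p (t + 1)) - Real.log (1 - p ^ t) := by ring
  rw [h1, h2]
  simp only [Real.exp_sub]
  rw [Real.exp_log (by linarith : (0:ℝ) < 1 - p ^ t)]
  have hp1' : p - 1 ≠ 0 := by intro h; nlinarith
  have hp1'' : (1 : ℝ) - p ≠ 0 := by intro h; nlinarith
  have hpt1' : (1 : ℝ) - p ^ t ≠ 0 := by intro h; nlinarith
  have hA : ((1:ℝ) - p) ^ (1 - t) ≠ 0 := (Real.rpow_pos_of_pos (by linarith) _).ne'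
  have hY : Real.exp (LA p (t+1)) ≠ 0 := (Real.exp_pos _).ne'
  have hX : Real.exp (LA p 1) ≠ 0 := (Real.exp_pos _).ne'
  field_simp
  ring

lemma qFact_eq {p : ℝ} (hp0 : 0 < p) (hp1 : p < 1) (i : ℕ) :
    qFact p i = (∏ j ∈ Finset.range i, (1 - p ^ (j + 1))) / (1 - p) ^ i := by
  unfold qFact
  have hne : ((1:ℝ) - p) ^ i ≠ 0 := pow_ne_zero _ (ne_of_gt (by linarith))
  rw [eq_div_iff hne]
  nth_rewrite 2 [← Finset.card_range i]
  rw [← Finset.prod_const, ← Finset.prod_mul_distrib]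
  refine Finset.prod_congr rfl fun j _ => ?_
  unfold qNum
  rw [← Real.rpow_natCast p (j + 1)]
  push_cast
  have hp1' : p - 1 ≠ 0 := by intro h; nlinarith
  field_simp
  ring

lemma qFact_ge {p : ℝ} (hp0 : 0 < p) (hp1 : p < 1) (i : ℕ) :
    Real.exp (LA p 1) / (1 - p) ^ i ≤ qFact p i := by
  rw [qFact_eq hp0 hp1 i]
  have hb : (0 : ℝ) < (1 - p) ^ i := pow_pos (by linarith) i
  have hpos : ∀ j : ℕ, (0:ℝ) < 1 - p ^ ((j:ℝ)+1) := g_pos hp0 hp1 1 one_pos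
  have hstep : Real.exp (LA p 1) ≤ ∏ j ∈ Finset.range i, (1 - p ^ (j+1)) := by
    have hprod : ∏ j ∈ Finset.range i, (1 - p^(j+1)) =
        Real.exp (∑ j ∈ Finset.range i, Real.log (1 - p ^ ((j:ℝ)+1))) := by
      rw [Real.exp_sum]
      exact Finset.prod_congr rfl fun j _ => by
        rw [Real.exp_log (hpos j), npow_eq_rpow hp0 j]
    rw [hprod]
    apply Real.exp_le_exp.2
    have hneg := (log_g_summable hp0 hp1 1 one_pos).neg
    have h := Summable.sum_le_tsum (Finset.range i)
      (fun k _ => by simpa using Real.log_nonpos (hpos k).le (g_le_one hp0 1 k)) hneg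
    rw [tsum_neg, Finset.sum_neg_distrib] at h
    have hLA : LA p 1 = ∑' k : ℕ, Real.log (1 - p ^ ((k:ℝ)+1)) := rfl
    rw [hLA]
    linarith
  exact div_le_div_of_nonneg_right hstep hb.le

lemma qFact_pos {p : ℝ} (hp0 : 0 < p) (hp1 : p < 1) (i : ℕ) : 0 < qFact p i := by
  rw [qFact_eq hp0 hp1 i]
  have h : ∀ j ∈ Finset.range i, (0:ℝ) < 1 - p ^ (j + 1) := by
    intro j _
    have : p ^ (j+1) < 1 := pow_lt_one₀ hp0.le hp1 (by omega)
    linarith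
  have hp := Finset.prod_pos h
  have h2 : (0:ℝ) < (1-p)^i := pow_pos (by linarith) i
  exact div_pos hp h2


lemma bessel_summable {p ν : ℝ} (hp0 : 0 < p) (hp1 : p < 1) (hν : -1 < ν) {x : ℝ}
    (hx0 : 0 ≤ x) (hx1 : (1 - p) * x < 1) :
    Summable fun i : ℕ =>
      (-1 : ℝ) ^ i / (qFact p i * qGamma p ((i : ℝ) + ν + 1)) * x ^ (2 * i) := by
  set E := Real.exp (LA p 1) with hE
  have hE0 : (0 : ℝ) < E := Real.exp_pos _
  have hB : (0 : ℝ) < 1 - p := by linarith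
  have hr : ((1 - p) * x) ^ 2 < 1 := pow_lt_one₀ (mul_nonneg hB.le hx0) hx1 two_ne_zero
  refine Summable.of_norm_bounded (g := fun i => (1 - p) ^ ν / E ^ 2 * (((1 - p) * x) ^ 2) ^ i)
    ((summable_geometric_of_lt_one (by positivity) hr).mul_left _) fun i => ?_
  have hFpos := qFact_pos hp0 hp1 i
  have htpos : (0 : ℝ) < (i : ℝ) + ν + 1 := by
    have := (Nat.cast_nonneg i : (0 : ℝ) ≤ i); linarith
  have hGpos := qGamma_pos hp0 hp1 _ htpos
  have hr1 : ((1 : ℝ) - p) ^ ((1 : ℝ) - ((i : ℝ) + ν + 1)) =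
      ((1 - p) ^ i)⁻¹ * (((1 - p) ^ ν)⁻¹ : ℝ) := by
    rw [show (1 : ℝ) - ((i : ℝ) + ν + 1) = (-(i : ℝ)) + (-ν) by ring,
      Real.rpow_add hB, Real.rpow_neg hB.le, Real.rpow_neg hB.le, Real.rpow_natCast]
  have hD : (E / (1 - p) ^ i) * ((1 - p) ^ ((1 : ℝ) - ((i : ℝ) + ν + 1)) * E) ≤
      qFact p i * qGamma p ((i : ℝ) + ν + 1) := by
    have h1 := qFact_ge hp0 hp1 i
    have h2 := qGamma_ge hp0 hp1 _ htpos
    have hnn : (0 : ℝ) ≤ (1 - p) ^ ((1 : ℝ) - ((i : ℝ) + ν + 1)) * E :=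
      mul_nonneg (Real.rpow_nonneg hB.le _) hE0.le
    exact mul_le_mul h1 h2 hnn hFpos.le
  have hDlowpos : (0 : ℝ) < (E / (1 - p) ^ i) * ((1 - p) ^ ((1 : ℝ) - ((i : ℝ) + ν + 1)) * E) := by
    have := Real.rpow_pos_of_pos hB ((1 : ℝ) - ((i : ℝ) + ν + 1))
    positivity
  have hnorm : ‖(-1 : ℝ) ^ i / (qFact p i * qGamma p ((i : ℝ) + ν + 1)) * x ^ (2 * i)‖ =
      x ^ (2 * i) / (qFact p i * qGamma p ((i : ℝ) + ν + 1)) := by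
    rw [norm_mul, norm_div, norm_pow, norm_neg, norm_one, one_pow, Real.norm_eq_abs,
      Real.norm_eq_abs, abs_of_pos (by positivity), abs_of_nonneg (by positivity)]
    ring
  rw [hnorm]
  calc x ^ (2 * i) / (qFact p i * qGamma p ((i : ℝ) + ν + 1)) ≤
      x ^ (2 * i) / ((E / (1 - p) ^ i) * ((1 - p) ^ ((1 : ℝ) - ((i : ℝ) + ν + 1)) * E)) :=
        div_le_div_of_nonneg_left (by positivity) hDlowpos hD
    _ = (1 - p) ^ ν / E ^ 2 * (((1 - p) * x) ^ 2) ^ i := by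
        rw [hr1]
        have h1 : ((1 : ℝ) - p) ^ i ≠ 0 := by positivity
        have h2 : ((1 : ℝ) - p) ^ ν ≠ 0 := (Real.rpow_pos_of_pos hB ν).ne'
        have h3 : ((((1 : ℝ) - p) * x) ^ 2) ^ i = (1 - p) ^ (2 * i) * x ^ (2 * i) := by
          rw [← pow_mul, mul_pow]
        rw [h3]
        field_simp
        ring


/-- `∂^q_u (u^ν J^{(1)}_ν(u|q²)) = u^ν J^{(1)}_{ν-1}(u|q²)`
for `ν > 0` and `0 < u < 1/(1-q)`. -/
theorem qBessel1_qDeriv_mul (q : ℝ) (hq0 : 0 < q) (hq1 : q < 1)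
    (ν : ℝ) (hν : ν > 0) (u : ℝ) (hu0 : 0 < u) (hu1 : u < 1 / (1 - q)) :
    qDeriv q (fun s => s ^ ν * qBessel1 q ν s) u = u ^ ν * qBessel1 q (ν - 1) u := by
  have hq1' : (0 : ℝ) < 1 + q := by linarith
  have hp0 : (0 : ℝ) < q ^ 2 := by positivity
  have hp1 : q ^ 2 < 1 := by nlinarith
  have hu1' : (1 - q) * u < 1 := by
    rw [lt_div_iff₀ (by linarith : (0:ℝ) < 1 - q)] at hu1
    linarith [hu1]
  have hX0 : (0 : ℝ) < u / (1 + q) := div_pos hu0 hq1'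
  have hxX : (1 - q ^ 2) * (u / (1 + q)) < 1 := by
    have h : (1 - q ^ 2) * (u / (1 + q)) = (1 - q) * u := by
      field_simp
      ring
    rw [h]; exact hu1'
  have hxqX : (1 - q ^ 2) * (q * (u / (1 + q))) < 1 := by
    have h2 : (0 : ℝ) ≤ (1 - q ^ 2) * (u / (1 + q)) :=
      mul_nonneg (by nlinarith) hX0.le
    nlinarith
  have hν1 : (-1 : ℝ) < ν := by linarith
  have hS1 : Summable fun i : ℕ =>
      (-1 : ℝ) ^ i / (qFact (q ^ 2) i * qGamma (q ^ 2) ((i : ℝ) + ν + 1)) *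
        (u / (1 + q)) ^ (2 * i) :=
    bessel_summable hp0 hp1 hν1 hX0.le hxX
  have hS2 : Summable fun i : ℕ =>
      (-1 : ℝ) ^ i / (qFact (q ^ 2) i * qGamma (q ^ 2) ((i : ℝ) + ν + 1)) *
        (q * (u / (1 + q))) ^ (2 * i) :=
    bessel_summable hp0 hp1 hν1 (by positivity) hxqX
  -- termwise key identity
  have hkey : ∀ i : ℕ,
      (q ^ 2 : ℝ) ^ ν * ((-1 : ℝ) ^ i / (qFact (q ^ 2) i * qGamma (q ^ 2) ((i : ℝ) + ν + 1)) *
          (q * (u / (1 + q))) ^ (2 * i)) -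
        (-1 : ℝ) ^ i / (qFact (q ^ 2) i * qGamma (q ^ 2) ((i : ℝ) + ν + 1)) *
          (u / (1 + q)) ^ (2 * i) =
      (q ^ 2 - 1) * ((-1 : ℝ) ^ i / (qFact (q ^ 2) i * qGamma (q ^ 2) ((i : ℝ) + (ν - 1) + 1)) *
          (u / (1 + q)) ^ (2 * i)) := by
    intro i
    have hti : (0 : ℝ) < (i : ℝ) + ν := by
      have := (Nat.cast_nonneg i : (0 : ℝ) ≤ i); linarith
    have hfe := qGamma_add_one hp0 hp1 ((i : ℝ) + ν) hti
    have hG1 : (0 : ℝ) < qGamma (q ^ 2) ((i : ℝ) + ν) := qGamma_pos hp0 hp1 _ hti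
    have hF : (0 : ℝ) < qFact (q ^ 2) i := qFact_pos hp0 hp1 i
    have hqX2 : (q * (u / (1 + q))) ^ (2 * i) = (q ^ 2) ^ i * (u / (1 + q)) ^ (2 * i) := by
      rw [mul_pow]
      congr 1
      rw [pow_mul]
    have hpν : (q ^ 2 : ℝ) ^ ν * ((q ^ 2 : ℝ) ^ (i : ℕ)) = (q ^ 2 : ℝ) ^ ((i : ℝ) + ν) := by
      rw [← Real.rpow_natCast (q ^ 2) i, ← Real.rpow_add hp0, add_comm]
    have hnum1 : (q ^ 2 : ℝ) ^ ((i : ℝ) + ν) < 1 := Real.rpow_lt_one hp0.le hp1 hti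
    have he : (i : ℝ) + (ν - 1) + 1 = (i : ℝ) + ν := by ring
    rw [he, hqX2, hfe]
    unfold qNum
    rw [← hpν]
    have hne : (q ^ 2 : ℝ) ^ ν * ((q ^ 2 : ℝ) ^ (i : ℕ)) - 1 ≠ 0 := by
      rw [hpν]; nlinarith
    have hp1ne : (q ^ 2 : ℝ) - 1 ≠ 0 := by nlinarith
    field_simp
  -- the sum identity
  have hsum : (q ^ 2 : ℝ) ^ ν *
        (∑' i : ℕ, (-1 : ℝ) ^ i / (qFact (q ^ 2) i * qGamma (q ^ 2) ((i : ℝ) + ν + 1)) *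
          (q * (u / (1 + q))) ^ (2 * i)) -
      (∑' i : ℕ, (-1 : ℝ) ^ i / (qFact (q ^ 2) i * qGamma (q ^ 2) ((i : ℝ) + ν + 1)) *
          (u / (1 + q)) ^ (2 * i)) =
      (q ^ 2 - 1) *
        ∑' i : ℕ, (-1 : ℝ) ^ i / (qFact (q ^ 2) i * qGamma (q ^ 2) ((i : ℝ) + (ν - 1) + 1)) *
          (u / (1 + q)) ^ (2 * i) := by
    rw [← tsum_mul_left, ← Summable.tsum_sub (hS2.mul_left _) hS1, ← tsum_mul_left]
    exact tsum_congr hkey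
  -- rpow facts
  have hqq : (q : ℝ) ^ ν * q ^ ν = (q ^ 2 : ℝ) ^ ν := by
    rw [← Real.rpow_natCast q 2, ← Real.rpow_mul hq0.le, ← Real.rpow_add hq0]
    norm_num
    ring_nf
  have hXsplit : (u / (1 + q)) ^ ν = (u / (1 + q)) ^ (ν - 1) * (u / (1 + q)) := by
    calc (u / (1 + q)) ^ ν = (u / (1 + q)) ^ (ν - 1 + 1) := by norm_num
      _ = (u / (1 + q)) ^ (ν - 1) * (u / (1 + q)) ^ (1 : ℝ) := Real.rpow_add hX0 _ _
      _ = (u / (1 + q)) ^ (ν - 1) * (u / (1 + q)) := by rw [Real.rpow_one]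
  -- main computation
  unfold qDeriv
  simp only [qBessel1]
  rw [mul_div_assoc q u (1 + q)]
  rw [Real.mul_rpow hq0.le hu0.le, Real.mul_rpow hq0.le hX0.le]
  have hnum : q ^ ν * u ^ ν * (q ^ ν * (u / (1 + q)) ^ ν *
        ∑' i : ℕ, (-1 : ℝ) ^ i / (qFact (q ^ 2) i * qGamma (q ^ 2) ((i : ℝ) + ν + 1)) *
          (q * (u / (1 + q))) ^ (2 * i)) -
      u ^ ν * ((u / (1 + q)) ^ ν *
        ∑' i : ℕ, (-1 : ℝ) ^ i / (qFact (q ^ 2) i * qGamma (q ^ 2) ((i : ℝ) + ν + 1)) *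
          (u / (1 + q)) ^ (2 * i)) =
      u ^ ν * (u / (1 + q)) ^ ν * ((q ^ 2 - 1) *
        ∑' i : ℕ, (-1 : ℝ) ^ i / (qFact (q ^ 2) i * qGamma (q ^ 2) ((i : ℝ) + (ν - 1) + 1)) *
          (u / (1 + q)) ^ (2 * i)) := by
    rw [← hsum, ← hqq]
    ring
  rw [hnum, hXsplit]
  have hu' : u ≠ 0 := hu0.ne'
  have hq1n : (1 : ℝ) + q ≠ 0 := hq1'.ne'
  have hqm1 : q - 1 ≠ 0 := by intro h; nlinarith
  field_simp
  ring
end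
end

section
/- For every real ν > 0 and every real u > 0, the second q-Bessel function satisfies ∂^q_u ( u^{ν+1} J^{(2)}_{ν−1}(u|q²) ) = [2ν]_q · u^{ν} J^{(2)}_{ν−1}(u|q²) − q^{ν+1} u^{ν+1} J^{(2)}_ν(qu|q²). -/
open scoped BigOperators
open Real Filter

noncomputable section

-- lower bound on the infinite product
lemma tprod_ge (Q : ℝ) (hQ0 : 0 < Q) (hQ1 : Q < 1) (t : ℝ) (ht : 0 < t) :
    (1 - Q) ^ ((1 - Q)⁻¹ : ℝ) ≤ ∏' k : ℕ, (1 - Q ^ (k + 1)) / (1 - Q ^ ((k : ℝ) + t)) := by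
  have h1Q : 0 < 1 - Q := by linarith
  have hδ1 : (1 - Q : ℝ) ^ ((1 - Q)⁻¹ : ℝ) ≤ 1 :=
    Real.rpow_le_one h1Q.le (by linarith) (by positivity)
  set g : ℕ → ℝ := fun k => (1 - Q ^ (k + 1)) / (1 - Q ^ ((k : ℝ) + t)) with hg
  have hfacpos : ∀ k : ℕ, (0:ℝ) < 1 - Q ^ ((k : ℝ) + t) := by
    intro k
    have : Q ^ ((k : ℝ) + t) < 1 := Real.rpow_lt_one hQ0.le hQ1 (by positivity)
    linarith
  have hstep : ∀ k : ℕ, (1 - Q) ^ ((Q ^ k : ℝ)) ≤ g k := by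
    intro k
    have h1 : (1 + -Q) ^ ((Q ^ k : ℝ)) ≤ 1 + (Q ^ k : ℝ) * (-Q) :=
      rpow_one_add_le_one_add_mul_self (by linarith) (by positivity)
        (pow_le_one₀ hQ0.le hQ1.le)
    have h2 : (1 - Q) ^ ((Q ^ k : ℝ)) ≤ 1 - Q ^ (k + 1) := by
      rw [pow_succ]
      calc (1 - Q) ^ ((Q ^ k : ℝ)) = (1 + -Q) ^ ((Q ^ k : ℝ)) := by ring_nf
        _ ≤ 1 + (Q ^ k : ℝ) * (-Q) := h1
        _ = 1 - Q ^ k * Q := by ring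
    refine h2.trans ?_
    rw [le_div_iff₀ (hfacpos k)]
    have hnum : (0:ℝ) ≤ 1 - Q ^ (k + 1) := by
      have : Q ^ (k+1) ≤ 1 := pow_le_one₀ hQ0.le hQ1.le
      linarith
    have hden : 1 - Q ^ ((k : ℝ) + t) ≤ 1 := by
      have : (0:ℝ) < Q ^ ((k : ℝ) + t) := Real.rpow_pos_of_pos hQ0 _
      linarith
    nlinarith
  have hfin : ∀ s : Finset ℕ, (1 - Q) ^ ((1 - Q)⁻¹ : ℝ) ≤ ∏ k ∈ s, g k := by
    intro s
    have hsum : ∑ k ∈ s, (Q : ℝ) ^ k ≤ (1 - Q)⁻¹ := by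
      calc ∑ k ∈ s, (Q : ℝ) ^ k ≤ ∑' k : ℕ, (Q : ℝ) ^ k :=
            Summable.sum_le_tsum s (fun i _ => by positivity)
              (summable_geometric_of_lt_one hQ0.le hQ1)
        _ = (1 - Q)⁻¹ := tsum_geometric_of_lt_one hQ0.le hQ1
    have hprod : (1 - Q) ^ (∑ k ∈ s, (Q:ℝ) ^ k) = ∏ k ∈ s, (1 - Q) ^ ((Q ^ k : ℝ)) := by
      rw [← Real.rpow_sum_of_pos h1Q]
    calc (1 - Q) ^ ((1 - Q)⁻¹ : ℝ) ≤ (1 - Q) ^ (∑ k ∈ s, (Q:ℝ) ^ k) :=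
          Real.rpow_le_rpow_of_exponent_ge h1Q (by linarith) hsum
      _ = ∏ k ∈ s, (1 - Q) ^ ((Q ^ k : ℝ)) := hprod
      _ ≤ ∏ k ∈ s, g k :=
          Finset.prod_le_prod (fun k _ => by positivity) (fun k _ => hstep k)
  by_cases hm : Multipliable g
  · exact ge_of_tendsto hm.hasProd (Eventually.of_forall hfin)
  · rw [tprod_eq_one_of_not_multipliable hm]; exact hδ1

lemma qGamma_ge_s6 (Q : ℝ) (hQ0 : 0 < Q) (hQ1 : Q < 1) (t : ℝ) (ht : 0 < t) :
    (1 - Q) ^ ((1:ℝ) - t) * ((1 - Q) ^ ((1 - Q)⁻¹ : ℝ)) ≤ qGamma Q t := by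
  have h1Q : 0 < 1 - Q := by linarith
  have := tprod_ge Q hQ0 hQ1 t ht
  have hp : (0:ℝ) < (1 - Q) ^ ((1:ℝ) - t) := Real.rpow_pos_of_pos h1Q _
  rw [qGamma]
  exact mul_le_mul_of_nonneg_left this hp.le

lemma qGamma_pos_s6 (Q : ℝ) (hQ0 : 0 < Q) (hQ1 : Q < 1) (t : ℝ) (ht : 0 < t) :
    0 < qGamma Q t := by
  have h1Q : 0 < 1 - Q := by linarith
  have h : (0:ℝ) < (1 - Q) ^ ((1:ℝ) - t) * ((1 - Q) ^ ((1 - Q)⁻¹ : ℝ)) := by positivity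
  exact lt_of_lt_of_le h (qGamma_ge_s6 Q hQ0 hQ1 t ht)

lemma qFact_one_le (Q : ℝ) (hQ0 : 0 < Q) (hQ1 : Q < 1) (n : ℕ) :
    1 ≤ qFact Q n := by
  have h1Q : Q - 1 < 0 := by linarith
  rw [qFact]
  have key : ∀ i ∈ Finset.range n, (1:ℝ) ≤ qNum Q ((i:ℝ)+1) := by
    intro i _
    rw [qNum, le_div_iff_of_neg h1Q]
    have : Q ^ ((i:ℝ) + 1) ≤ Q ^ (1:ℝ) :=
      Real.rpow_le_rpow_of_exponent_ge hQ0 hQ1.le (by simp [Nat.cast_nonneg])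
    rw [Real.rpow_one] at this
    linarith
  calc (1:ℝ) = ∏ _i ∈ Finset.range n, (1:ℝ) := by simp
    _ ≤ ∏ i ∈ Finset.range n, qNum Q ((i:ℝ)+1) :=
        Finset.prod_le_prod (fun i _ => zero_le_one) key

lemma qFact_pos_s6 (Q : ℝ) (hQ0 : 0 < Q) (hQ1 : Q < 1) (n : ℕ) : 0 < qFact Q n :=
  lt_of_lt_of_le one_pos (qFact_one_le Q hQ0 hQ1 n)

lemma summable_main (q α y : ℝ) (hq0 : 0 < q) (hq1 : q < 1) (hα : -1 < α) (hy : 0 ≤ y) :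
    Summable (fun i : ℕ => q ^ (2*(i:ℝ)*((i:ℝ)+α)) * (-1:ℝ)^i /
      (qFact (q^2) i * qGamma (q^2) ((i:ℝ)+α+1)) * y ^ i) := by
  have hQ0 : (0:ℝ) < q^2 := by positivity
  have hQ1 : q^2 < 1 := by nlinarith
  have h1Q : (0:ℝ) < 1 - q^2 := by linarith
  set δ : ℝ := (1 - q^2) ^ ((1 - q^2)⁻¹ : ℝ) with hδdef
  have hδ : 0 < δ := Real.rpow_pos_of_pos h1Q _
  set r : ℝ := (1 - q^2) * y with hrdef
  have hr : 0 ≤ r := by positivity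
  set M : ℝ := δ⁻¹ * (1 - q^2) ^ (α : ℝ) with hMdef
  have hM : 0 < M := by positivity
  set b : ℕ → ℝ := fun i => q ^ (2*(i:ℝ)*((i:ℝ)+α)) * r ^ i with hbdef
  have hbnn : ∀ i, 0 ≤ b i := fun i => by
    have : (0:ℝ) < q ^ (2*(i:ℝ)*((i:ℝ)+α)) := Real.rpow_pos_of_pos hq0 _
    positivity
  -- b i = (c i) ^ i with c i = q^(2(i+α)) * r
  have hb : ∀ i : ℕ, b i = (q ^ (2*((i:ℝ)+α)) * r) ^ i := by
    intro i
    show q ^ (2*(i:ℝ)*((i:ℝ)+α)) * r ^ i = _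
    have hmp : (q ^ (2*((i:ℝ)+α)) * r) ^ i = (q ^ (2*((i:ℝ)+α)))^i * r ^ i := mul_pow _ _ _
    rw [hmp, show (2*(i:ℝ)*((i:ℝ)+α)) = (2*((i:ℝ)+α))*(i:ℝ) by ring,
      Real.rpow_mul hq0.le, Real.rpow_natCast]
  -- c i = (q^(2α) * r) * (q^2)^i
  have hc : ∀ i : ℕ, q ^ (2*((i:ℝ)+α)) * r = (q ^ (2*α) * r) * (q^2) ^ i := by
    intro i
    have h : (2*((i:ℝ)+α)) = 2*α + (2:ℝ)*(i:ℝ) := by ring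
    rw [h, Real.rpow_add hq0]
    have h2 : q ^ ((2:ℝ)*(i:ℝ)) = (q^2 : ℝ) ^ i := by
      rw [show ((2:ℝ)*(i:ℝ)) = (((2*i : ℕ)):ℝ) by push_cast; ring, Real.rpow_natCast, pow_mul]
    rw [h2]; ring
  set C : ℝ := q ^ (2*α) * r with hCdef
  have hC : 0 ≤ C := by
    have : (0:ℝ) < q ^ (2*α) := Real.rpow_pos_of_pos hq0 _
    positivity
  obtain ⟨N, hN⟩ : ∃ N : ℕ, (q^2:ℝ)^N < (1/2) / (C + 1) :=
    exists_pow_lt_of_lt_one (by positivity) hQ1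
  have hsmall : ∀ i : ℕ, N ≤ i → q ^ (2*((i:ℝ)+α)) * r ≤ 1/2 := by
    intro i hi
    rw [hc i]
    have h1 : (q^2:ℝ)^i ≤ (q^2:ℝ)^N := pow_le_pow_of_le_one hQ0.le hQ1.le hi
    have h2 : C * (q^2:ℝ)^i ≤ (C+1) * (q^2:ℝ)^N := by
      have : (0:ℝ) ≤ (q^2:ℝ)^i := by positivity
      nlinarith
    have h3 : (C+1) * (q^2:ℝ)^N ≤ 1/2 := by
      rw [← le_div_iff₀' (by linarith)]
      exact hN.le
    linarith
  have hbsum : Summable b := by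
    refine Summable.of_norm_bounded_eventually (g := fun i => (1/2:ℝ)^i)
      (summable_geometric_of_lt_one (by norm_num) (by norm_num)) ?_
    rw [Nat.cofinite_eq_atTop]
    filter_upwards [eventually_ge_atTop N] with i hi
    rw [Real.norm_eq_abs, abs_of_nonneg (hbnn i), hb i]
    refine pow_le_pow_left₀ ?_ (hsmall i hi) i
    have : (0:ℝ) < q ^ (2*((i:ℝ)+α)) := Real.rpow_pos_of_pos hq0 _
    positivity
  refine Summable.of_norm_bounded (g := fun i => M * b i) (hbsum.mul_left M) ?_
  intro i
  have hF : 0 < qFact (q^2) i := qFact_pos_s6 _ hQ0 hQ1 i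
  have ht : (0:ℝ) < (i:ℝ)+α+1 := by
    have : (0:ℝ) ≤ (i:ℝ) := Nat.cast_nonneg i
    linarith
  have hΓ : 0 < qGamma (q^2) ((i:ℝ)+α+1) := qGamma_pos_s6 _ hQ0 hQ1 _ ht
  have hqe : (0:ℝ) < q ^ (2*(i:ℝ)*((i:ℝ)+α)) := Real.rpow_pos_of_pos hq0 _
  -- lower bound on denominator
  have hden : (1 - q^2) ^ (-((i:ℝ)+α)) * δ ≤ qFact (q^2) i * qGamma (q^2) ((i:ℝ)+α+1) := by
    have h1 := qGamma_ge_s6 (q^2) hQ0 hQ1 ((i:ℝ)+α+1) ht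
    have h2 : ((1:ℝ) - ((i:ℝ)+α+1)) = -((i:ℝ)+α) := by ring
    rw [h2] at h1
    calc (1 - q^2) ^ (-((i:ℝ)+α)) * δ ≤ qGamma (q^2) ((i:ℝ)+α+1) := h1
      _ = 1 * qGamma (q^2) ((i:ℝ)+α+1) := (one_mul _).symm
      _ ≤ qFact (q^2) i * qGamma (q^2) ((i:ℝ)+α+1) :=
          mul_le_mul_of_nonneg_right (qFact_one_le _ hQ0 hQ1 i) hΓ.le
  have hdenpos : (0:ℝ) < (1 - q^2) ^ (-((i:ℝ)+α)) * δ := by positivity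
  have hinv : (qFact (q^2) i * qGamma (q^2) ((i:ℝ)+α+1))⁻¹ ≤
      (1 - q^2) ^ (((i:ℝ)+α)) * δ⁻¹ := by
    have h3 := inv_anti₀ hdenpos hden
    calc (qFact (q^2) i * qGamma (q^2) ((i:ℝ)+α+1))⁻¹
        ≤ ((1 - q^2) ^ (-((i:ℝ)+α)) * δ)⁻¹ := h3
      _ = (1 - q^2) ^ (((i:ℝ)+α)) * δ⁻¹ := by
          rw [Real.rpow_neg h1Q.le, mul_inv, inv_inv]
  -- now the norm bound
  rw [Real.norm_eq_abs]
  have habs : |q ^ (2*(i:ℝ)*((i:ℝ)+α)) * (-1:ℝ)^i /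
      (qFact (q^2) i * qGamma (q^2) ((i:ℝ)+α+1)) * y ^ i| =
      q ^ (2*(i:ℝ)*((i:ℝ)+α)) * (qFact (q^2) i * qGamma (q^2) ((i:ℝ)+α+1))⁻¹ * y ^ i := by
    rw [abs_mul, abs_div, abs_mul, abs_pow, abs_neg, abs_one, one_pow, mul_one,
      abs_of_pos hqe, abs_of_pos (by positivity : (0:ℝ) < qFact (q^2) i * qGamma (q^2) ((i:ℝ)+α+1)),
      abs_pow, abs_of_nonneg hy, div_eq_mul_inv]
  rw [habs]
  have key : q ^ (2*(i:ℝ)*((i:ℝ)+α)) * (qFact (q^2) i * qGamma (q^2) ((i:ℝ)+α+1))⁻¹ * y ^ i ≤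
      q ^ (2*(i:ℝ)*((i:ℝ)+α)) * ((1 - q^2) ^ (((i:ℝ)+α)) * δ⁻¹) * y ^ i := by
    have hynn : (0:ℝ) ≤ y ^ i := by positivity
    have := mul_le_mul_of_nonneg_left hinv hqe.le
    exact mul_le_mul_of_nonneg_right this hynn
  refine key.trans (le_of_eq ?_)
  -- M * b i = q^e * ((1-q²)^(i+α) δ⁻¹) * y^i
  rw [hMdef, hbdef]
  simp only []
  rw [hrdef, mul_pow]
  have hsplit : (1 - q^2 : ℝ) ^ (((i:ℝ)+α)) = (1 - q^2) ^ i * (1 - q^2) ^ (α:ℝ) := by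
    rw [show ((i:ℝ)+α) = ((i:ℕ):ℝ) + α by norm_num, Real.rpow_add h1Q, Real.rpow_natCast]
  rw [hsplit]; ring

lemma termwise (q ν : ℝ) (hq0 : 0 < q) (hq1 : q < 1) (hν : 0 < ν) (Y : ℝ) (j : ℕ) :
    (q ^ (2*((j+1:ℕ):ℝ)*(((j+1:ℕ):ℝ)+(ν-1))) * (-1:ℝ)^(j+1) /
      (qFact (q^2) (j+1) * qGamma (q^2) (((j+1:ℕ):ℝ)+(ν-1)+1))) * (((q^2)^(j+1) - 1) * Y^(j+1))
    = (-(q^2-1) * q^(2*ν) * Y) * ((q ^ (2*(j:ℝ)*((j:ℝ)+ν)) * (-1:ℝ)^j /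
      (qFact (q^2) j * qGamma (q^2) ((j:ℝ)+ν+1))) * ((q^2*Y)^j)) := by
  have hQ0 : (0:ℝ) < q^2 := by positivity
  have hQ1 : q^2 < 1 := by nlinarith
  have hF : (0:ℝ) < qFact (q^2) j := qFact_pos_s6 _ hQ0 hQ1 j
  have hΓ : (0:ℝ) < qGamma (q^2) ((j:ℝ)+ν+1) := by
    refine qGamma_pos_s6 _ hQ0 hQ1 _ ?_
    have : (0:ℝ) ≤ (j:ℝ) := Nat.cast_nonneg j
    linarith
  have hq21 : (q^2 - 1 : ℝ) ≠ 0 := by nlinarith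
  have hqnum : ((q^2:ℝ)^(j+1) - 1) ≠ 0 := by
    have : (q^2:ℝ)^(j+1) < 1 := pow_lt_one₀ hQ0.le hQ1 (Nat.succ_ne_zero j)
    linarith
  have hcast : ((j+1:ℕ):ℝ) = (j:ℝ)+1 := by push_cast; ring
  rw [hcast]
  rw [show ((j:ℝ)+1+(ν-1)+1) = (j:ℝ)+ν+1 by ring]
  rw [show qFact (q^2) (j+1) = qFact (q^2) j * qNum (q^2) ((j:ℝ)+1) from by
    rw [qFact, qFact, Finset.prod_range_succ]]
  rw [qNum, show ((q^2:ℝ) ^ ((j:ℝ)+1)) = (q^2:ℝ)^(j+1) from by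
    rw [show ((j:ℝ)+1) = ((j+1:ℕ):ℝ) by push_cast; ring, Real.rpow_natCast]]
  rw [show 2*((j:ℝ)+1)*((j:ℝ)+1+(ν-1)) = 2*(j:ℝ)*((j:ℝ)+ν) + (2*ν + 2*(j:ℝ)) by ring,
    Real.rpow_add hq0, Real.rpow_add hq0]
  rw [show q ^ (2*(j:ℝ)) = ((q:ℝ)^2)^j from by
    rw [show (2*(j:ℝ)) = ((2*j:ℕ):ℝ) by push_cast; ring, Real.rpow_natCast, pow_mul]]
  rw [pow_succ (-1:ℝ) j, mul_pow (q^2) Y j, pow_succ Y j]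
  field_simp

/-- `∂^q_u (u^{ν+1} J^{(2)}_{ν-1}(u|q²))
= [2ν]_q u^ν J^{(2)}_{ν-1}(u|q²) - q^{ν+1} u^{ν+1} J^{(2)}_ν(qu|q²)` for `ν > 0`, `u > 0`. -/
theorem qBessel2_qDeriv_corollary (q : ℝ) (hq0 : 0 < q) (hq1 : q < 1)
    (ν : ℝ) (hν : ν > 0) (u : ℝ) (hu0 : 0 < u) :
    qDeriv q (fun s => s ^ (ν + 1) * qBessel2 q (ν - 1) s) u =
      qNum q (2 * ν) * u ^ ν * qBessel2 q (ν - 1) u -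
        q ^ (ν + 1) * u ^ (ν + 1) * qBessel2 q ν (q * u) := by
  have hc : (0:ℝ) < 1 + q := by linarith
  have hq21 : (q - 1 : ℝ) ≠ 0 := by linarith
  set X : ℝ := u / (1+q) with hX
  have hX0 : 0 < X := by positivity
  have hQ0 : (0:ℝ) < q^2 := by positivity
  have hQ1 : q^2 < 1 := by nlinarith
  set A : ℕ → ℝ := fun i => q ^ (2*(i:ℝ)*((i:ℝ)+(ν-1))) * (-1:ℝ)^i /
    (qFact (q^2) i * qGamma (q^2) ((i:ℝ)+(ν-1)+1)) with hA
  set B : ℕ → ℝ := fun i => q ^ (2*(i:ℝ)*((i:ℝ)+ν)) * (-1:ℝ)^i /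
    (qFact (q^2) i * qGamma (q^2) ((i:ℝ)+ν+1)) with hB
  set S₀ : ℝ := ∑' i : ℕ, A i * (u/(1+q))^(2*i) with hS₀
  set S₁ : ℝ := ∑' i : ℕ, A i * (q*u/(1+q))^(2*i) with hS₁
  set S₂ : ℝ := ∑' i : ℕ, B i * (q*u/(1+q))^(2*i) with hS₂
  -- power rewrites
  have hpow0 : ∀ i : ℕ, (u/(1+q))^(2*i) = (X^2)^i := by
    intro i; rw [pow_mul, hX]
  have hpow1 : ∀ i : ℕ, (q*u/(1+q))^(2*i) = (q^2*X^2)^i := by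
    intro i; rw [pow_mul, mul_div_assoc, mul_pow, hX]
  -- summability
  have hsum0 : Summable (fun i : ℕ => A i * (X^2)^i) := by
    rw [hA]; exact summable_main q (ν-1) (X^2) hq0 hq1 (by linarith) (by positivity)
  have hsum1 : Summable (fun i : ℕ => A i * (q^2*X^2)^i) := by
    rw [hA]; exact summable_main q (ν-1) (q^2*X^2) hq0 hq1 (by linarith) (by positivity)
  -- the core identity
  have CI : S₁ - S₀ = -(q^2-1) * q^(2*ν) * X^2 * S₂ := by
    have hc0 : S₀ = ∑' i : ℕ, A i * (X^2)^i := by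
      rw [hS₀]; exact tsum_congr fun i => by rw [hpow0]
    have hc1 : S₁ = ∑' i : ℕ, A i * (q^2*X^2)^i := by
      rw [hS₁]; exact tsum_congr fun i => by rw [hpow1]
    have hc2 : S₂ = ∑' i : ℕ, B i * (q^2*X^2)^i := by
      rw [hS₂]; exact tsum_congr fun i => by rw [hpow1]
    rw [hc0, hc1, hc2, ← Summable.tsum_sub hsum1 hsum0]
    have hcong : ∀ i : ℕ, A i * (q^2*X^2)^i - A i * (X^2)^i
        = A i * (((q^2)^i - 1) * (X^2)^i) := by
      intro i; rw [mul_pow]; ring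
    rw [tsum_congr hcong]
    have hDsum : Summable (fun i : ℕ => A i * (((q^2)^i - 1) * (X^2)^i)) :=
      (hsum1.sub hsum0).congr hcong
    rw [Summable.tsum_eq_zero_add hDsum]
    have hD0 : A 0 * (((q^2)^0 - 1) * (X^2)^0) = 0 := by simp
    rw [hD0, zero_add]
    have hterm : ∀ j : ℕ, A (j+1) * (((q^2)^(j+1) - 1) * (X^2)^(j+1))
        = (-(q^2-1) * q^(2*ν) * X^2) * (B j * (q^2*X^2)^j) := by
      intro j
      rw [hA, hB]
      exact termwise q ν hq0 hq1 hν (X^2) j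
    rw [tsum_congr hterm, tsum_mul_left]
  have hS1eq : S₁ = S₀ - (q^2-1) * q^(2*ν) * X^2 * S₂ := by linarith
  -- unfold the three Bessel values
  have e0 : qBessel2 q (ν-1) u = q^((ν-1)^2) * X^(ν-1) * S₀ := by
    rw [qBessel2, hS₀, hA, hX]
  have e1 : qBessel2 q (ν-1) (q*u) = q^((ν-1)^2) * (q^(ν-1) * X^(ν-1)) * S₁ := by
    rw [qBessel2, hS₁, hA, hX, mul_div_assoc, Real.mul_rpow hq0.le hX0.le]
  have e2 : qBessel2 q ν (q*u) = q^(ν^2) * (q^ν * X^ν) * S₂ := by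
    rw [qBessel2, hS₂, hB, hX, mul_div_assoc, Real.mul_rpow hq0.le hX0.le]
  -- final algebra
  have hu : u = (1+q)*X := by rw [hX]; field_simp
  have hqν : (q:ℝ)^ν ≠ 0 := (Real.rpow_pos_of_pos hq0 ν).ne'
  have d2 : q^(ν-1) = q^ν / q := by
    rw [eq_div_iff hq0.ne', ← Real.rpow_add_one hq0.ne', show ν-1+1 = ν by ring]
  have d6 : X^(ν-1) = X^ν / X := by
    rw [eq_div_iff hX0.ne', ← Real.rpow_add_one hX0.ne', show ν-1+1 = ν by ring]
  have d4 : q^((ν-1)^2) = q^(ν^2) * q / (q^ν * q^ν) := by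
    rw [eq_div_iff (mul_ne_zero hqν hqν), ← mul_assoc, ← Real.rpow_add hq0,
      ← Real.rpow_add hq0, ← Real.rpow_add_one hq0.ne',
      show (ν-1)^2+ν+ν = ν^2+1 by ring]
  have m1 : q^(ν+1) = q^ν * q := Real.rpow_add_one hq0.ne' ν
  have m3 : q^(2*ν) = q^ν * q^ν := by
    rw [show (2*ν) = ν+ν by ring, Real.rpow_add hq0]
  have m5 : u^(ν+1) = u^ν * u := Real.rpow_add_one hu0.ne' ν
  rw [qDeriv]
  rw [e0, e1, e2, Real.mul_rpow hq0.le hu0.le, hS1eq, qNum]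
  rw [d2, d4, d6, m1, m3, m5, hu]
  have hX' : (X:ℝ) ≠ 0 := hX0.ne'
  field_simp
  ring
end
end
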